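/- For h ∈ ℝ and z ∈ ℂ∖ℝ: ((z−w)/(2π²))·∫₀^∞ r²/((−h²+r²+w)(−h²+r²+z)) dr = (1/(4π))·(√(−h²+z) − √(−h²+w)), where the square roots have positive real part. -/

import Mathlib

open MeasureTheory Real Set Filter Topology

noncomputable def Fprim (s : ℂ) (r : ℝ) : ℂ :=
  (1 / (2 * Complex.I * s)) * (Complex.log (r - Complex.I * s) - Complex.log (r + Complex.I * s))

lemma im_sub (s : ℂ) (r : ℝ) : ((r : ℂ) - Complex.I * s).im = -s.re := by simp
lemma im_add (s : ℂ) (r : ℝ) : ((r : ℂ) + Complex.I * s).im = s.re := by simp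

lemma denom_ne (s : ℂ) (hs : 0 < s.re) (r : ℝ) : (r : ℂ) ^ 2 + s ^ 2 ≠ 0 := by
  have h1 : ((r : ℂ) - Complex.I * s) ≠ 0 := by
    intro h; have := congrArg Complex.im h; simp at this; simp [this] at hs
  have h2 : ((r : ℂ) + Complex.I * s) ≠ 0 := by
    intro h; have := congrArg Complex.im h; simp at this; simp [this] at hs
  have : (r : ℂ) ^ 2 + s ^ 2 = ((r : ℂ) - Complex.I * s) * ((r : ℂ) + Complex.I * s) := by
    ring_nf
    simp [Complex.I_sq]
    try ring
  rw [this]; exact mul_ne_zero h1 h2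

lemma hasDeriv_Fprim (s : ℂ) (hs : 0 < s.re) (x : ℝ) :
    HasDerivAt (Fprim s) (1 / ((x : ℂ) ^ 2 + s ^ 2)) x := by
  have hm1 : ((x : ℂ) - Complex.I * s) ∈ Complex.slitPlane := by
    rw [Complex.mem_slitPlane_iff]; right; rw [im_sub]; simpa using hs.ne'
  have hm2 : ((x : ℂ) + Complex.I * s) ∈ Complex.slitPlane := by
    rw [Complex.mem_slitPlane_iff]; right; rw [im_add]; exact hs.ne'
  have h1 : HasDerivAt (fun r : ℝ => Complex.log ((r : ℂ) - Complex.I * s))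
      (((x : ℂ) - Complex.I * s)⁻¹) x := by
    have := (Complex.hasDerivAt_log hm1).comp (x : ℂ)
      ((hasDerivAt_id ((x : ℂ))).sub_const (Complex.I * s))
    simpa using this.comp_ofReal
  have h2 : HasDerivAt (fun r : ℝ => Complex.log ((r : ℂ) + Complex.I * s))
      (((x : ℂ) + Complex.I * s)⁻¹) x := by
    have := (Complex.hasDerivAt_log hm2).comp (x : ℂ)
      ((hasDerivAt_id ((x : ℂ))).add_const (Complex.I * s))
    simpa using this.comp_ofReal
  have := ((h1.sub h2).const_mul (1 / (2 * Complex.I * s)))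
  refine this.congr_deriv (Eq.symm ?_)
  have hne1 : ((x : ℂ) - Complex.I * s) ≠ 0 := Complex.slitPlane_ne_zero hm1
  have hne2 : ((x : ℂ) + Complex.I * s) ≠ 0 := Complex.slitPlane_ne_zero hm2
  have hsne : s ≠ 0 := fun h => by simp [h] at hs
  have hd := denom_ne s hs x
  rw [inv_sub_inv hne1 hne2, show ((x : ℂ) - Complex.I * s) * ((x : ℂ) + Complex.I * s) = (x : ℂ) ^ 2 + s ^ 2 by
    linear_combination (-s ^ 2) * Complex.I_sq]
  field_simp
  ring

lemma integrable_aux (s : ℂ) (hs : 0 < s.re) :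
    IntegrableOn (fun r : ℝ => 1 / ((r : ℂ) ^ 2 + s ^ 2)) (Ioi 0) := by
  have hcont : Continuous fun r : ℝ => 1 / ((r : ℂ) ^ 2 + s ^ 2) := by
    apply Continuous.div continuous_const
    · fun_prop
    · exact fun r => denom_ne s hs r
  set A : ℝ := 2 * ‖s‖ + 1 with hA
  have hA1 : 0 < A := by positivity
  have h01 : IntegrableOn (fun r : ℝ => 1 / ((r : ℂ) ^ 2 + s ^ 2)) (Ioc 0 A) :=
    (hcont.integrableOn_Icc (a := 0) (b := A)).mono_set Ioc_subset_Icc_self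
  have h02 : IntegrableOn (fun r : ℝ => 1 / ((r : ℂ) ^ 2 + s ^ 2)) (Ioi A) := by
    have hg : IntegrableOn (fun r : ℝ => 2 * r ^ (-2 : ℝ)) (Ioi A) :=
      (integrableOn_Ioi_rpow_of_lt (by norm_num) hA1).const_mul 2
    apply Integrable.mono' hg (hcont.aestronglyMeasurable.restrict)
    · filter_upwards [ae_restrict_mem measurableSet_Ioi] with r hr
      have hrA : A < r := hr
      have hr0 : 0 < r := lt_trans hA1 hrA
      have habs : ‖s‖ ≤ (r - 1) / 2 := by
        rw [hA] at hrA; linarith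
      have hs2 : (‖s‖) ^ 2 ≤ r ^ 2 / 4 := by
        nlinarith [norm_nonneg s]
      have hre : r ^ 2 / 2 ≤ ((r : ℂ) ^ 2 + s ^ 2).re := by
        have h1 : ((r : ℂ) ^ 2 + s ^ 2).re = r ^ 2 + (s.re ^ 2 - s.im ^ 2) := by
          simp [Complex.add_re, Complex.sq_norm, pow_two, Complex.mul_re]
          try ring
        have h2 : s.im ^ 2 ≤ (‖s‖) ^ 2 := by
          rw [Complex.sq_norm, Complex.normSq_apply]; nlinarith
        nlinarith [sq_nonneg s.re]
      have hlow : r ^ 2 / 2 ≤ ‖(r : ℂ) ^ 2 + s ^ 2‖ :=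
        le_trans hre (Complex.re_le_norm _)
      have hpos : (0:ℝ) < r ^ 2 / 2 := by positivity
      rw [norm_div, norm_one]
      have hrn : ‖(r:ℂ)^2+s^2‖ = ‖(r:ℂ)^2+s^2‖ := rfl
      rw [hrn]
      have hr2 : r ^ (2:ℝ) = r ^ 2 := by
        rw [show (2:ℝ) = ((2:ℕ):ℝ) by norm_num, Real.rpow_natCast]
      calc 1 / ‖(r:ℂ)^2+s^2‖ ≤ 1 / (r^2/2) :=
            one_div_le_one_div_of_le hpos hlow
        _ = 2 * r ^ (-2:ℝ) := by
            rw [Real.rpow_neg hr0.le, hr2]; field_simp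
  have : Ioi (0:ℝ) = Ioc 0 A ∪ Ioi A := (Ioc_union_Ioi_eq_Ioi hA1.le).symm
  rw [this]
  exact h01.union h02

lemma tendsto_Fprim (s : ℂ) (hs : 0 < s.re) : Tendsto (Fprim s) atTop (𝓝 0) := by
  have heq : ∀ᶠ r : ℝ in atTop, Fprim s r =
      (1 / (2 * Complex.I * s)) *
        (Complex.log (1 - Complex.I * s / r) - Complex.log (1 + Complex.I * s / r)) := by
    filter_upwards [eventually_gt_atTop 0] with r hr
    have hr0 : ((r : ℝ) : ℂ) ≠ 0 := Complex.ofReal_ne_zero.mpr hr.ne'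
    have hx1 : (1 - Complex.I * s / r : ℂ) ≠ 0 := by
      intro h; have := congrArg Complex.im h
      simp [Complex.div_im] at this
      rcases this with h' | h'
      · exact hs.ne' h'
      · exact hr.ne' (by exact_mod_cast h')
    have hx2 : (1 + Complex.I * s / r : ℂ) ≠ 0 := by
      intro h; have := congrArg Complex.im h
      simp [Complex.div_im] at this
      rcases this with h' | h'
      · exact hs.ne' h'
      · exact hr.ne' (by exact_mod_cast h')
    have e1 : ((r : ℂ) - Complex.I * s) = (r : ℝ) * (1 - Complex.I * s / r) := by
      field_simp
    have e2 : ((r : ℂ) + Complex.I * s) = (r : ℝ) * (1 + Complex.I * s / r) := by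
      field_simp
    rw [Fprim, e1, e2, Complex.log_ofReal_mul hr hx1, Complex.log_ofReal_mul hr hx2]
    ring
  have hlim : Tendsto (fun r : ℝ => (Complex.I * s / r : ℂ)) atTop (𝓝 0) := by
    have h1 : Tendsto (fun r : ℝ => ((r : ℂ))⁻¹) atTop (𝓝 0) := by
      have := tendsto_inv_atTop_zero.comp (tendsto_id (α := ℝ))
      have h2 := (Complex.continuous_ofReal.tendsto 0).comp this
      simpa [Function.comp_def] using h2
    have := h1.const_mul (Complex.I * s)
    simpa [div_eq_mul_inv] using this
  have hcl : ContinuousAt Complex.log 1 :=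
    continuousAt_clog (by simp [Complex.mem_slitPlane_iff])
  have l1 : Tendsto (fun r : ℝ => Complex.log (1 - Complex.I * s / r)) atTop (𝓝 0) := by
    have : Tendsto (fun r : ℝ => (1 - Complex.I * s / r : ℂ)) atTop (𝓝 1) := by
      simpa using (tendsto_const_nhds (x := (1:ℂ))).sub hlim
    simpa [Function.comp_def] using hcl.tendsto.comp this
  have l2 : Tendsto (fun r : ℝ => Complex.log (1 + Complex.I * s / r)) atTop (𝓝 0) := by
    have : Tendsto (fun r : ℝ => (1 + Complex.I * s / r : ℂ)) atTop (𝓝 1) := by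
      simpa using (tendsto_const_nhds (x := (1:ℂ))).add hlim
    simpa [Function.comp_def] using hcl.tendsto.comp this
  have h0 := ((l1.sub l2).const_mul (1 / (2 * Complex.I * s)))
  exact Filter.Tendsto.congr' (Filter.EventuallyEq.symm heq) (by simpa using h0)

lemma Fprim_zero (s : ℂ) (hs : 0 < s.re) : Fprim s 0 = -(π / (2 * s)) := by
  have him : (Complex.I * s).im = s.re := by simp
  have hIs : Complex.I * s ≠ 0 := by
    intro h; have := congrArg Complex.im h; rw [him] at this; simp at this; exact hs.ne' this
  have harg : Complex.arg (-(Complex.I * s)) = Complex.arg (Complex.I * s) - π :=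
    Complex.arg_neg_eq_arg_sub_pi_of_im_pos (by rw [him]; exact hs)
  have hlog : Complex.log (-(Complex.I * s)) - Complex.log (Complex.I * s) = -π * Complex.I := by
    rw [Complex.log, Complex.log, norm_neg, harg]
    push_cast
    ring
  have hsne : s ≠ 0 := fun h => by simp [h] at hs
  rw [Fprim]
  push_cast
  rw [zero_sub, zero_add, hlog]
  have hI : Complex.I ≠ 0 := Complex.I_ne_zero
  field_simp

lemma integral_one_div_sq_add (s : ℂ) (hs : 0 < s.re) :
    ∫ r in Ioi (0:ℝ), 1 / ((r : ℂ) ^ 2 + s ^ 2) = π / (2 * s) := by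
  have := integral_Ioi_of_hasDerivAt_of_tendsto' (f := Fprim s)
    (f' := fun x : ℝ => 1 / ((x : ℂ) ^ 2 + s ^ 2)) (a := 0) (m := 0)
    (fun x _ => hasDeriv_Fprim s hs x) (integrable_aux s hs) (tendsto_Fprim s hs)
  rw [this, Fprim_zero s hs]
  ring

/-- For `h ∈ ℝ` and non-real `z, w ∈ ℂ`, with the square roots
taken with positive real part:
`((z−w)/(2π²)) ∫₀^∞ r²/((−h²+r²+w)(−h²+r²+z)) dr = (√(−h²+z) − √(−h²+w))/(4π)`. -/
theorem stmt16 (h : ℝ) (z w : ℂ) (hz : z.im ≠ 0) (hw : w.im ≠ 0)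
    (hrez : 0 < ((-(h : ℂ) ^ 2 + z) ^ (1/2 : ℂ)).re)
    (hrew : 0 < ((-(h : ℂ) ^ 2 + w) ^ (1/2 : ℂ)).re) :
    ((z - w) / (2 * (π : ℂ) ^ 2)) *
        (∫ r in Set.Ioi (0 : ℝ),
          ((r : ℂ) ^ 2) / ((-(h : ℂ) ^ 2 + (r : ℂ) ^ 2 + w) * (-(h : ℂ) ^ 2 + (r : ℂ) ^ 2 + z)))
      = (1 / (4 * (π : ℂ))) *
          ((-(h : ℂ) ^ 2 + z) ^ (1/2 : ℂ) - (-(h : ℂ) ^ 2 + w) ^ (1/2 : ℂ)) := by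
  by_cases hzw : z = w
  · simp [hzw]
  set a : ℂ := -(h : ℂ) ^ 2 + w with ha
  set b : ℂ := -(h : ℂ) ^ 2 + z with hb
  set σa : ℂ := a ^ (1/2 : ℂ) with hσa
  set σb : ℂ := b ^ (1/2 : ℂ) with hσb
  have hσa2 : σa ^ 2 = a := by
    rw [hσa, show (1/2 : ℂ) = ((2:ℕ) : ℂ)⁻¹ by norm_num]
    exact_mod_cast Complex.cpow_nat_inv_pow a two_ne_zero
  have hσb2 : σb ^ 2 = b := by
    rw [hσb, show (1/2 : ℂ) = ((2:ℕ) : ℂ)⁻¹ by norm_num]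
    exact_mod_cast Complex.cpow_nat_inv_pow b two_ne_zero
  have hσane : σa ≠ 0 := fun h0 => by simp [h0] at hrew
  have hσbne : σb ≠ 0 := fun h0 => by simp [h0] at hrez
  have hba : σb ^ 2 - σa ^ 2 ≠ 0 := by
    rw [hσa2, hσb2, ha, hb]
    intro h0
    exact hzw (by linear_combination h0)
  have e : (fun r : ℝ => ((r : ℂ) ^ 2) /
        ((-(h : ℂ) ^ 2 + (r : ℂ) ^ 2 + w) * (-(h : ℂ) ^ 2 + (r : ℂ) ^ 2 + z)))
      = fun r : ℝ => (1 / (σb ^ 2 - σa ^ 2)) *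
          (σb ^ 2 * (1 / ((r : ℂ) ^ 2 + σb ^ 2)) - σa ^ 2 * (1 / ((r : ℂ) ^ 2 + σa ^ 2))) := by
    funext r
    have hA : -(h : ℂ) ^ 2 + (r : ℂ) ^ 2 + w = (r : ℂ) ^ 2 + σa ^ 2 := by
      rw [hσa2, ha]; ring
    have hB : -(h : ℂ) ^ 2 + (r : ℂ) ^ 2 + z = (r : ℂ) ^ 2 + σb ^ 2 := by
      rw [hσb2, hb]; ring
    rw [hA, hB]
    have d1 := denom_ne σa hrew r
    have d2 := denom_ne σb hrez r
    field_simp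
    ring
  rw [e, MeasureTheory.integral_const_mul, integral_sub
      ((integrable_aux σb hrez).const_mul _) ((integrable_aux σa hrew).const_mul _),
    MeasureTheory.integral_const_mul, MeasureTheory.integral_const_mul,
    integral_one_div_sq_add σa hrew, integral_one_div_sq_add σb hrez]
  have hzw2 : z - w = σb ^ 2 - σa ^ 2 := by rw [hσa2, hσb2, ha, hb]; ring
  have hπ : (π : ℂ) ≠ 0 := by exact_mod_cast Real.pi_ne_zero
  rw [hzw2]
  have hstep : σb ^ 2 * ((π:ℂ) / (2 * σb)) - σa ^ 2 * ((π:ℂ) / (2 * σa)) =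
      ((π:ℂ) / 2) * (σb - σa) := by
    field_simp
  rw [hstep]
  field_simp
  ring
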